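/- Let H be a real separable Hilbert space with Hilbert (orthonormal) basis (φ_j)_{j≥0}, let (λ_j)_{j≥1} be a nondecreasing sequence of nonnegative reals, let β > 0, let k ≥ 1 and ω_1 ≥ ω_2 ≥ ⋯ ≥ ω_k > 0. For f ∈ H with ⟨f, φ_0⟩ = 0, define Q(f) := Σ_{j≥1} (λ_j² + β λ_j) ⟨f, φ_j⟩² ∈ [0, ∞]. Then for any f_1, …, f_k ∈ H satisfying ⟨f_i, φ_0⟩ = 0 and ⟨f_i, f_j⟩ = δ_{ij} for 1 ≤ i ≤ j ≤ k, one has Σ_{i=1}^k ω_i Q(f_i) ≥ Σ_{i=1}^k ω_i (λ_i² + β λ_i), and equality holds when f_i = φ_i for i = 1, …, k. -/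

import Mathlib

open scoped ENNReal
open scoped RealInnerProductSpace

private lemma slowcv_telescope (g : ℕ → ℝ) (i n : ℕ) (h : i ≤ n + 1) :
    ∑ m ∈ Finset.Icc i n, (g m - g (m + 1)) = g i - g (n + 1) := by
  rw [← Finset.Ico_add_one_right_eq_Icc, Finset.sum_Ico_eq_sum_range]
  have h3 := Finset.sum_range_sub' (fun j => g (i + j)) (n + 1 - i)
  simp only [← add_assoc, add_zero] at h3
  rw [show i + (n + 1 - i) = n + 1 by omega] at h3
  exact h3

private lemma slowcv_core (μ t : ℕ → ℝ≥0∞) (m : ℕ) (hm : 1 ≤ m)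
    (hμtop : ∀ j, μ j ≠ ⊤)
    (hμmono : ∀ i j, 1 ≤ i → i ≤ j → μ i ≤ μ j)
    (ht1 : ∀ j, t j ≤ 1) (ht0 : t 0 = 0)
    (htsum : ∑' j, t j = (m : ℝ≥0∞)) :
    ∑ j ∈ Finset.Icc 1 m, μ j ≤ ∑' j, μ j * t j := by
  classical
  have hins : Finset.Iic m = insert 0 (Finset.Icc 1 m) := by
    ext x; simp [Finset.mem_Icc, Finset.mem_Iic]; omega
  have h0notin : (0 : ℕ) ∉ Finset.Icc 1 m := by simp
  have hsplit : (∑' j : ↑(Finset.Iic m : Set ℕ), μ j * t j)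
      + (∑' j : ↥(Finset.Iic m : Set ℕ)ᶜ, μ (j : ℕ) * t (j : ℕ)) = ∑' j, μ j * t j :=
    Summable.tsum_add_tsum_compl (f := fun j => μ j * t j) ENNReal.summable ENNReal.summable
  have hsplit_t : (∑' j : ↑(Finset.Iic m : Set ℕ), t j)
      + (∑' j : ↥(Finset.Iic m : Set ℕ)ᶜ, t (j : ℕ)) = ∑' j, t j :=
    Summable.tsum_add_tsum_compl (f := t) ENNReal.summable ENNReal.summable
  have hfin1 : (∑' j : ↑(Finset.Iic m : Set ℕ), μ j * t j)
      = ∑ j ∈ Finset.Iic m, μ j * t j := Finset.tsum_subtype _ (fun j => μ j * t j)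
  have hfin2 : (∑' j : ↑(Finset.Iic m : Set ℕ), t j)
      = ∑ j ∈ Finset.Iic m, t j := Finset.tsum_subtype _ t
  set A : ℝ≥0∞ := ∑ j ∈ Finset.Icc 1 m, μ j * t j with hA
  set T : ℝ≥0∞ := ∑ j ∈ Finset.Icc 1 m, t j with hT
  set B : ℝ≥0∞ := ∑' j : ↥(Finset.Iic m : Set ℕ)ᶜ, μ (j : ℕ) * t (j : ℕ) with hB
  set B' : ℝ≥0∞ := ∑' j : ↥(Finset.Iic m : Set ℕ)ᶜ, t (j : ℕ) with hB'
  have hAB : A + B = ∑' j, μ j * t j := by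
    rw [← hsplit, hfin1, hins, Finset.sum_insert h0notin, ht0, mul_zero, zero_add]
  have hTB : T + B' = (m : ℝ≥0∞) := by
    rw [← htsum, ← hsplit_t, hfin2, hins, Finset.sum_insert h0notin, ht0, zero_add]
  have hTne : T ≠ ⊤ := by
    have : T ≤ (m : ℝ≥0∞) := le_trans (le_add_right le_rfl) hTB.le
    exact ne_top_of_le_ne_top (by simp) this
  -- key pointwise inequality
  have key1 : ∀ j ∈ Finset.Icc 1 m, μ j + μ m * t j ≤ μ j * t j + μ m := by
    intro j hj
    simp only [Finset.mem_Icc] at hj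
    obtain ⟨e, he⟩ : ∃ e, μ m = μ j + e :=
      ⟨μ m - μ j, by rw [add_comm]; exact (tsub_add_cancel_of_le (hμmono j m hj.1 hj.2)).symm⟩
    have het : e * t j ≤ e := by
      simpa using mul_le_mul_right (ht1 j) e
    calc μ j + μ m * t j = μ j * t j + (μ j + e * t j) := by rw [he]; ring
      _ ≤ μ j * t j + (μ j + e) := add_le_add_right (add_le_add_right het _) _
      _ = μ j * t j + μ m := by rw [he]
  have key1' : (∑ j ∈ Finset.Icc 1 m, μ j) + μ m * T ≤ A + (m : ℝ≥0∞) * μ m := by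
    have := Finset.sum_le_sum key1
    rw [Finset.sum_add_distrib, Finset.sum_add_distrib, ← Finset.mul_sum,
      Finset.sum_const, Nat.card_Icc] at this
    simpa [nsmul_eq_mul] using this
  have key2 : μ m * B' ≤ B := by
    rw [hB', ENNReal.tsum_mul_left.symm]
    refine Summable.tsum_le_tsum (fun j => ?_) ENNReal.summable ENNReal.summable
    have hjm : m ≤ (j : ℕ) := by
      have := j.2
      simp [Finset.mem_Iic] at this
      omega
    exact mul_le_mul_left (hμmono m j hm hjm) _
  have key3 : (∑ j ∈ Finset.Icc 1 m, μ j) + μ m * T ≤ (A + B) + μ m * T := by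
    calc (∑ j ∈ Finset.Icc 1 m, μ j) + μ m * T ≤ A + (m : ℝ≥0∞) * μ m := key1'
      _ = A + (μ m * T + μ m * B') := by rw [← hTB]; ring
      _ ≤ A + (μ m * T + B) := by exact add_le_add_right (add_le_add_right key2 _) _
      _ = (A + B) + μ m * T := by ring
  have hμT : μ m * T ≠ ⊤ := ENNReal.mul_ne_top (hμtop m) hTne
  have := (ENNReal.add_le_add_iff_right hμT).1 key3
  rwa [hAB] at this

/-- Abstract form of Proposition 1: the first `k` nontrivial eigenfunctions
minimise the slow-CV objective. For an orthonormal basis `(φⱼ)ⱼ≥0`,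
nonnegative nondecreasing `(λⱼ)ⱼ≥1`, `β > 0`, and weights `ω₁ ≥ ⋯ ≥ ω_k > 0`,
the quadratic form `Q(f) = ∑ⱼ≥1 (λⱼ² + β λⱼ) ⟨f, φⱼ⟩²` satisfies
`∑ᵢ ωᵢ Q(fᵢ) ≥ ∑ᵢ ωᵢ (λᵢ² + β λᵢ)` over families `(fᵢ)` with `⟨fᵢ, φ₀⟩ = 0`
and `⟨fᵢ, fⱼ⟩ = δᵢⱼ`, with equality at `fᵢ = φᵢ`. -/
theorem variational_characterisation_slow_cv
    (H : Type*) [NormedAddCommGroup H] [InnerProductSpace ℝ H] [CompleteSpace H]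
    (φ : HilbertBasis ℕ ℝ H)
    (lam : ℕ → ℝ)
    (hlam_nonneg : ∀ j, 1 ≤ j → 0 ≤ lam j)
    (hlam_mono : ∀ i j, 1 ≤ i → i ≤ j → lam i ≤ lam j)
    (β : ℝ) (hβ : 0 < β)
    (k : ℕ) (hk : 1 ≤ k)
    (ω : ℕ → ℝ)
    (hω_mono : ∀ i j, 1 ≤ i → i ≤ j → j ≤ k → ω j ≤ ω i)
    (hω_pos : ∀ i, 1 ≤ i → i ≤ k → 0 < ω i)
    (Q : H → ℝ≥0∞)
    (hQ : ∀ f : H,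
      Q f = ∑' j : {j : ℕ // 1 ≤ j},
        ENNReal.ofReal ((lam j.1 ^ 2 + β * lam j.1) * ⟪f, φ j.1⟫ ^ 2)) :
    (∀ f : ℕ → H,
      (∀ i, 1 ≤ i → i ≤ k → ⟪f i, φ 0⟫ = 0) →
      (∀ i j, 1 ≤ i → i ≤ j → j ≤ k → ⟪f i, f j⟫ = if i = j then 1 else 0) →
      ENNReal.ofReal (∑ i ∈ Finset.Icc 1 k, ω i * (lam i ^ 2 + β * lam i))
        ≤ ∑ i ∈ Finset.Icc 1 k, ENNReal.ofReal (ω i) * Q (f i))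
    ∧ ∑ i ∈ Finset.Icc 1 k, ENNReal.ofReal (ω i) * Q (φ i)
        = ENNReal.ofReal (∑ i ∈ Finset.Icc 1 k, ω i * (lam i ^ 2 + β * lam i)) := by
  classical
  -- notation
  have hμR_nonneg : ∀ j, 1 ≤ j → 0 ≤ lam j ^ 2 + β * lam j := fun j hj => by
    have := hlam_nonneg j hj
    nlinarith [hβ.le]
  have hμR_mono : ∀ i j, 1 ≤ i → i ≤ j →
      lam i ^ 2 + β * lam i ≤ lam j ^ 2 + β * lam j := by
    intro i j hi hij
    have h1 := hlam_nonneg i hi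
    have h2 := hlam_mono i j hi hij
    nlinarith [hβ.le]
  set μ : ℕ → ℝ≥0∞ := fun j => ENNReal.ofReal (lam j ^ 2 + β * lam j) with hμ
  have hμtop : ∀ j, μ j ≠ ⊤ := fun j => ENNReal.ofReal_ne_top
  have hμmono : ∀ i j, 1 ≤ i → i ≤ j → μ i ≤ μ j := fun i j hi hij =>
    ENNReal.ofReal_le_ofReal (hμR_mono i j hi hij)
  -- Abel decomposition of the weights
  set g : ℕ → ℝ := fun m => if m ≤ k then ω m else 0 with hg
  set δ : ℕ → ℝ := fun m => g m - g (m + 1) with hδdef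
  have hδ_nonneg : ∀ m, 1 ≤ m → m ≤ k → 0 ≤ δ m := by
    intro m h1 h2
    simp only [hδdef, hg]
    rcases eq_or_lt_of_le h2 with h | h
    · subst h
      simp only [le_refl, if_true, if_neg (by omega : ¬ m + 1 ≤ m)]
      simpa using (hω_pos m h1 le_rfl).le
    · rw [if_pos h2, if_pos (by omega : m + 1 ≤ k)]
      have := hω_mono m (m + 1) h1 (by omega) (by omega)
      linarith
  have hAbel : ∀ i, 1 ≤ i → i ≤ k → ω i = ∑ m ∈ Finset.Icc i k, δ m := by
    intro i h1 h2
    rw [hδdef]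
    rw [slowcv_telescope g i k (by omega)]
    simp only [hg, if_pos h2, if_neg (by omega : ¬ k + 1 ≤ k), sub_zero]
  have hAbel' : ∀ i, 1 ≤ i → i ≤ k →
      ENNReal.ofReal (ω i) = ∑ m ∈ Finset.Icc i k, ENNReal.ofReal (δ m) := by
    intro i h1 h2
    rw [hAbel i h1 h2, ENNReal.ofReal_sum_of_nonneg]
    intro m hm
    simp only [Finset.mem_Icc] at hm
    exact hδ_nonneg m (le_trans h1 hm.1) hm.2
  -- the key double-sum swap
  have hswap : ∀ G : ℕ → ℝ≥0∞,
      ∑ i ∈ Finset.Icc 1 k, (∑ m ∈ Finset.Icc i k, ENNReal.ofReal (δ m)) * G i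
        = ∑ m ∈ Finset.Icc 1 k, ENNReal.ofReal (δ m) * ∑ i ∈ Finset.Icc 1 m, G i := by
    intro G
    simp_rw [Finset.sum_mul, Finset.mul_sum]
    exact Finset.sum_comm' (fun i m => by simp only [Finset.mem_Icc]; omega)
  -- the weighted sum of eigenvalues
  have hsum_eq : ∀ G : ℕ → ℝ≥0∞, (∀ i, 1 ≤ i → i ≤ k → G i = μ i) →
      ∑ i ∈ Finset.Icc 1 k, ENNReal.ofReal (ω i) * G i
        = ENNReal.ofReal (∑ i ∈ Finset.Icc 1 k, ω i * (lam i ^ 2 + β * lam i)) := by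
    intro G hG
    rw [ENNReal.ofReal_sum_of_nonneg (fun i hi => by
      simp only [Finset.mem_Icc] at hi
      exact mul_nonneg (hω_pos i hi.1 hi.2).le (hμR_nonneg i hi.1))]
    refine Finset.sum_congr rfl fun i hi => ?_
    simp only [Finset.mem_Icc] at hi
    rw [hG i hi.1 hi.2, ENNReal.ofReal_mul (hω_pos i hi.1 hi.2).le]
  constructor
  · -- the inequality
    intro f hf0 horth
    set d : ℕ → ℕ → ℝ≥0∞ := fun i j => ENNReal.ofReal (⟪f i, φ j⟫ ^ 2) with hd
    -- Q in terms of d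
    have hQd : ∀ i, 1 ≤ i → i ≤ k → Q (f i) = ∑' j : ℕ, μ j * d i j := by
      intro i h1 h2
      rw [hQ]
      have hsub : (∑' j : {j : ℕ // 1 ≤ j},
          ENNReal.ofReal ((lam j.1 ^ 2 + β * lam j.1) * ⟪f i, φ j.1⟫ ^ 2))
          = ∑' j : ℕ, Set.indicator {j : ℕ | 1 ≤ j}
            (fun j => ENNReal.ofReal ((lam j ^ 2 + β * lam j) * ⟪f i, φ j⟫ ^ 2)) j :=
        tsum_subtype {j : ℕ | 1 ≤ j}
          (fun j => ENNReal.ofReal ((lam j ^ 2 + β * lam j) * ⟪f i, φ j⟫ ^ 2))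
      rw [hsub]
      refine tsum_congr fun j => ?_
      by_cases hj : 1 ≤ j
      · rw [Set.indicator_of_mem (show j ∈ {j : ℕ | 1 ≤ j} from hj), ENNReal.ofReal_mul (hμR_nonneg j hj)]
      · have hj0 : j = 0 := by omega
        subst hj0
        rw [Set.indicator_of_notMem (show (0:ℕ) ∉ {j : ℕ | 1 ≤ j} by simp)]
        simp [hd, hf0 i h1 h2]
    -- row sums of d are 1 (Parseval)
    have hd_row : ∀ i, 1 ≤ i → i ≤ k → ∑' j : ℕ, d i j = 1 := by
      intro i h1 h2
      have hs := φ.summable_inner_mul_inner (f i) (f i)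
      have ht := φ.tsum_inner_mul_inner (f i) (f i)
      have hsq : ∀ j, ⟪f i, φ j⟫ * ⟪φ j, f i⟫ = ⟪f i, φ j⟫ ^ 2 := fun j => by
        rw [real_inner_comm (φ j) (f i)]; ring
      simp only [hsq] at hs ht
      have hfi : ⟪f i, f i⟫ = 1 := by simpa using horth i i h1 le_rfl h2
      rw [hfi] at ht
      calc ∑' j : ℕ, d i j
          = ENNReal.ofReal (∑' j : ℕ, ⟪f i, φ j⟫ ^ 2) :=
            (ENNReal.ofReal_tsum_of_nonneg (fun j => sq_nonneg _) hs).symm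
        _ = 1 := by rw [ht]; simp
    -- column sums bounded by 1 (Bessel)
    have hbessel : ∀ m, m ≤ k → ∀ j : ℕ, ∑ i ∈ Finset.Icc 1 m, d i j ≤ 1 := by
      intro m hmk j
      have hon : Orthonormal ℝ (fun i : ↥(Finset.Icc 1 m) => f i.1) := by
        rw [orthonormal_iff_ite]
        rintro ⟨a, ha⟩ ⟨b, hb⟩
        simp only [Finset.mem_Icc] at ha hb
        rcases le_total a b with hab | hab
        · rw [horth a b ha.1 hab (le_trans hb.2 hmk)]
          simp [Subtype.ext_iff]
        · rw [real_inner_comm, horth b a hb.1 hab (le_trans ha.2 hmk)]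
          simp only [Subtype.mk.injEq]
          by_cases h : a = b <;> simp [h, eq_comm]
      have hb1 := hon.sum_inner_products_le (φ j) (s := Finset.univ)
      rw [Finset.univ_eq_attach] at hb1
      have hφn : ‖φ j‖ = 1 := φ.orthonormal.1 j
      simp only [Real.norm_eq_abs, sq_abs, hφn, one_pow] at hb1
      have hb2 : ∑ i ∈ Finset.Icc 1 m, ⟪f i, φ j⟫ ^ 2 ≤ 1 := by
        rwa [Finset.sum_attach (Finset.Icc 1 m) (fun i => ⟪f i, φ j⟫ ^ 2)] at hb1
      calc ∑ i ∈ Finset.Icc 1 m, d i j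
          = ENNReal.ofReal (∑ i ∈ Finset.Icc 1 m, ⟪f i, φ j⟫ ^ 2) :=
            (ENNReal.ofReal_sum_of_nonneg (fun i _ => sq_nonneg _)).symm
        _ ≤ 1 := by simpa using ENNReal.ofReal_le_ofReal hb2
    -- partial-sum lower bound via the core lemma
    have hpartial : ∀ m, 1 ≤ m → m ≤ k →
        ∑ j ∈ Finset.Icc 1 m, μ j ≤ ∑ i ∈ Finset.Icc 1 m, Q (f i) := by
      intro m h1 h2
      have hcore := slowcv_core μ (fun j => ∑ i ∈ Finset.Icc 1 m, d i j) m h1 hμtop hμmono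
        (fun j => hbessel m h2 j)
        (by
          have : ∀ i ∈ Finset.Icc 1 m, d i 0 = 0 := by
            intro i hi
            simp only [Finset.mem_Icc] at hi
            simp [hd, hf0 i hi.1 (le_trans hi.2 h2)]
          simp [Finset.sum_congr rfl this])
        (by
          rw [Summable.tsum_finsetSum (fun i _ => ENNReal.summable)]
          rw [Finset.sum_congr rfl (fun i hi => by
            simp only [Finset.mem_Icc] at hi
            exact hd_row i hi.1 (le_trans hi.2 h2))]
          simp [Nat.card_Icc])
      refine le_trans hcore (le_of_eq ?_)
      simp_rw [Finset.mul_sum]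
      rw [Summable.tsum_finsetSum (fun i _ => ENNReal.summable)]
      refine Finset.sum_congr rfl fun i hi => ?_
      simp only [Finset.mem_Icc] at hi
      exact (hQd i hi.1 (le_trans hi.2 h2)).symm
    -- put everything together with the Abel decomposition
    calc ENNReal.ofReal (∑ i ∈ Finset.Icc 1 k, ω i * (lam i ^ 2 + β * lam i))
        = ∑ i ∈ Finset.Icc 1 k, ENNReal.ofReal (ω i) * μ i :=
          (hsum_eq μ (fun _ _ _ => rfl)).symm
      _ = ∑ i ∈ Finset.Icc 1 k, (∑ m ∈ Finset.Icc i k, ENNReal.ofReal (δ m)) * μ i := by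
          refine Finset.sum_congr rfl fun i hi => ?_
          simp only [Finset.mem_Icc] at hi
          rw [hAbel' i hi.1 hi.2]
      _ = ∑ m ∈ Finset.Icc 1 k, ENNReal.ofReal (δ m) * ∑ i ∈ Finset.Icc 1 m, μ i := hswap μ
      _ ≤ ∑ m ∈ Finset.Icc 1 k, ENNReal.ofReal (δ m) * ∑ i ∈ Finset.Icc 1 m, Q (f i) := by
          refine Finset.sum_le_sum fun m hm => ?_
          simp only [Finset.mem_Icc] at hm
          exact mul_le_mul_right (hpartial m hm.1 hm.2) _
      _ = ∑ i ∈ Finset.Icc 1 k, (∑ m ∈ Finset.Icc i k, ENNReal.ofReal (δ m)) * Q (f i) :=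
          (hswap (fun i => Q (f i))).symm
      _ = ∑ i ∈ Finset.Icc 1 k, ENNReal.ofReal (ω i) * Q (f i) := by
          refine Finset.sum_congr rfl fun i hi => ?_
          simp only [Finset.mem_Icc] at hi
          rw [hAbel' i hi.1 hi.2]
  · -- equality at the eigenfunctions
    have hQφ : ∀ i, 1 ≤ i → i ≤ k → Q (φ i) = μ i := by
      intro i h1 _
      rw [hQ]
      have hzero : ∀ (b : {j : ℕ // 1 ≤ j}), b ≠ ⟨i, h1⟩ →
          ENNReal.ofReal ((lam b.1 ^ 2 + β * lam b.1) * ⟪φ i, φ b.1⟫ ^ 2) = 0 := by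
        rintro ⟨b, hb⟩ hne
        have hbi : i ≠ b := by
          intro h
          exact hne (by simp [Subtype.ext_iff, h])
        rw [φ.orthonormal.2 hbi]
        simp
      rw [tsum_eq_single (⟨i, h1⟩ : {j : ℕ // 1 ≤ j}) hzero]
      have : ⟪φ i, φ i⟫ = 1 := by
        rw [real_inner_self_eq_norm_sq, φ.orthonormal.1 i]; norm_num
      simp [this, φ.orthonormal.1 i, hμ]
    exact hsum_eq (fun i => Q (φ i)) hQφ
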